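/- If T is a tree on n vertices with maximum degree Δ(T), then γ_g(T) ≥ ⌈2n/(Δ(T)+3)⌉ − 1. -/

import Mathlib

open Finset

namespace DomGame

variable {V : Type*} [Fintype V] [DecidableEq V]

/-- Closed neighborhood of `v` in `G`, as a `Finset`. -/
noncomputable def cn (G : SimpleGraph V) (v : V) : Finset V :=
  haveI : DecidablePred (fun u : V => u = v ∨ G.Adj v u) := fun _ => Classical.propDecidable _
  Finset.univ.filter (fun u : V => u = v ∨ G.Adj v u)

/-- Value (number of remaining moves, optimal play) of the domination game on `G`,
with fuel, where `D` is the set of already dominated vertices and `who = true`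
means Dominator is to move (minimizing); `who = false` means Staller (maximizing). -/
noncomputable def auxVal (G : SimpleGraph V) : ℕ → Bool → Finset V → ℕ
  | 0, _, _ => 0
  | n + 1, who, D =>
    if D = Finset.univ then 0
    else
      haveI : DecidablePred (fun v : V => ¬ cn G v ⊆ D) := fun _ => Classical.propDecidable _
      let moves : Finset V := Finset.univ.filter (fun v : V => ¬ cn G v ⊆ D)
      if who then
        WithTop.untopD 0 ((moves.image (fun v => 1 + auxVal G n false (D ∪ cn G v))).min)
      else
        moves.sup (fun v => 1 + auxVal G n true (D ∪ cn G v))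

/-- Remaining moves of the domination game on the partially dominated graph `(G, D)`,
Dominator to move, both players optimal. -/
noncomputable def gVal (G : SimpleGraph V) (D : Finset V) : ℕ :=
  auxVal G (Fintype.card V) true D

/-- Remaining moves, Staller to move. -/
noncomputable def gVal' (G : SimpleGraph V) (D : Finset V) : ℕ :=
  auxVal G (Fintype.card V) false D

/-- The game domination number (Dominator starts). -/
noncomputable def gammaG (G : SimpleGraph V) : ℕ := gVal G ∅

/-- The Staller-start game domination number. -/
noncomputable def gammaG' (G : SimpleGraph V) : ℕ := gVal' G ∅

/-- `S` is a dominating set of `G`. -/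
def IsDomSet (G : SimpleGraph V) (S : Finset V) : Prop :=
  ∀ v : V, ∃ u ∈ S, u = v ∨ G.Adj u v

/-- The domination number of `G`. -/
noncomputable def gamma (G : SimpleGraph V) : ℕ :=
  sInf {n | ∃ S : Finset V, IsDomSet G S ∧ S.card = n}

end DomGame
set_option linter.unusedSectionVars false
section Aux
open DomGame SimpleGraph Finset

variable {V : Type*} [Fintype V] [DecidableEq V]

lemma mem_cn {G : SimpleGraph V} {u v : V} : u ∈ cn G v ↔ u = v ∨ G.Adj v u := by
  classical
  simp [cn]

lemma card_cn_le (G : SimpleGraph V) [DecidableRel G.Adj] (v : V) :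
    (cn G v).card ≤ G.maxDegree + 1 := by
  have h : cn G v ⊆ insert v (G.neighborFinset v) := by
    intro u hu
    rcases mem_cn.1 hu with h | h
    · simp [h]
    · simp [Finset.mem_insert, SimpleGraph.mem_neighborFinset, h]
  calc (cn G v).card ≤ (insert v (G.neighborFinset v)).card := Finset.card_le_card h
    _ ≤ (G.neighborFinset v).card + 1 := Finset.card_insert_le _ _
    _ = G.degree v + 1 := by rw [G.card_neighborFinset_eq_degree]
    _ ≤ G.maxDegree + 1 := by have := G.degree_le_maxDegree v; omega

lemma tree_walk_length {T : SimpleGraph V} (hT : T.IsTree) {a b : V} (p : T.Walk a b)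
    (hp : p.IsPath) : p.length = T.dist a b := by
  obtain ⟨q, hq⟩ := hT.isConnected.exists_walk_length_eq_dist a b
  have h1 : T.dist a b ≤ p.length := SimpleGraph.dist_le p
  have h2 : p = q.bypass := (hT.existsUnique_path a b).unique hp q.bypass_isPath
  have h3 : p.length ≤ T.dist a b := by
    rw [h2, ← hq]; exact q.length_bypass_le
  omega

lemma staller_move {T : SimpleGraph V} (hT : T.IsTree) {D : Finset V}
    (hD : D ≠ Finset.univ) : ∃ v, v ∉ D ∧ (cn T v \ D).card ≤ 2 := by
  classical
  have hne : (Finset.univ \ D).Nonempty := by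
    rw [Finset.sdiff_nonempty]
    exact fun h => hD (Finset.eq_univ_iff_forall.2 fun x => h (Finset.mem_univ x))
  obtain ⟨r⟩ := hT.isConnected.nonempty
  obtain ⟨v, hvmem, hvmax⟩ := Finset.exists_max_image (Finset.univ \ D)
    (fun w => T.dist r w) hne
  have hv : v ∉ D := (Finset.mem_sdiff.1 hvmem).2
  refine ⟨v, hv, ?_⟩
  -- the unique path from any undominated vertex a to r avoids v unless a = v
  have hpath : ∀ a : V, ∀ p : T.Walk a r, p.IsPath → a ≠ v → a ∉ D → v ∉ p.support := by
    intro a p hp hav haD hmem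
    have hsplit := congrArg Walk.length (p.take_spec hmem)
    rw [Walk.length_append] at hsplit
    have hdrop : (p.dropUntil v hmem).length = T.dist v r :=
      tree_walk_length hT _ (hp.dropUntil hmem)
    have hlen : p.length = T.dist a r := tree_walk_length hT p hp
    have har : T.dist a r ≤ T.dist v r := by
      have h1 := hvmax a (Finset.mem_sdiff.2 ⟨Finset.mem_univ a, haD⟩)
      simpa [SimpleGraph.dist_comm] using h1
    have htake : (p.takeUntil v hmem).length = 0 := by omega
    exact hav (Walk.eq_of_length_eq_zero htake)
  have key : ∀ a ∈ (cn T v \ D).erase v, ∀ b ∈ (cn T v \ D).erase v, a = b := by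
    have head_eq : ∀ a ∈ (cn T v \ D).erase v,
        ((hT.existsUnique_path v r).choose).support.tail = a ::
          ((hT.existsUnique_path a r).choose).support.tail := by
      intro a ha
      obtain ⟨hav, hacn⟩ := Finset.mem_erase.1 ha
      obtain ⟨hacn', haD⟩ := Finset.mem_sdiff.1 hacn
      have hadj : T.Adj v a := by
        rcases mem_cn.1 hacn' with h | h
        · exact absurd h hav
        · exact h
      set Pa := (hT.existsUnique_path a r).choose with hPa
      have hPaP : Pa.IsPath := (hT.existsUnique_path a r).choose_spec.1
      have hvnot : v ∉ Pa.support := hpath a Pa hPaP hav haD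
      have hQ : (Walk.cons hadj Pa).IsPath := hPaP.cons hvnot
      have := (hT.existsUnique_path v r).choose_spec
      have heq : (hT.existsUnique_path v r).choose = Walk.cons hadj Pa :=
        (hT.existsUnique_path v r).unique this.1 hQ
      rw [heq]
      rw [Walk.support_cons]
      simp only [List.tail_cons]
      exact Walk.support_eq_cons Pa
    intro a ha b hb
    have h1 := head_eq a ha
    have h2 := head_eq b hb
    rw [h1] at h2
    exact (List.cons.injEq _ _ _ _ ▸ h2).1
  have hsub : cn T v \ D ⊆ insert v ((cn T v \ D).erase v) := by
    intro x hx
    by_cases hxv : x = v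
    · simp [hxv]
    · exact Finset.mem_insert_of_mem (Finset.mem_erase.2 ⟨hxv, hx⟩)
  calc (cn T v \ D).card ≤ (insert v ((cn T v \ D).erase v)).card := Finset.card_le_card hsub
    _ ≤ ((cn T v \ D).erase v).card + 1 := Finset.card_insert_le _ _
    _ ≤ 1 + 1 := by have := Finset.card_le_one.2 key; omega
    _ = 2 := rfl


lemma auxVal_zero (G : SimpleGraph V) (who : Bool) (D : Finset V) :
    auxVal G 0 who D = 0 := rfl

lemma auxVal_succ_true (G : SimpleGraph V) (m : ℕ) (D : Finset V) :
    auxVal G (m+1) true D = if D = Finset.univ then 0 else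
      WithTop.untopD 0 (((@Finset.filter V (fun v => ¬ cn G v ⊆ D)
          (fun _ => Classical.propDecidable _) Finset.univ).image
        (fun v => 1 + auxVal G m false (D ∪ cn G v))).min) := rfl

lemma auxVal_succ_false (G : SimpleGraph V) (m : ℕ) (D : Finset V) :
    auxVal G (m+1) false D = if D = Finset.univ then 0 else
      (@Finset.filter V (fun v => ¬ cn G v ⊆ D)
          (fun _ => Classical.propDecidable _) Finset.univ).sup
        (fun v => 1 + auxVal G m true (D ∪ cn G v)) := rfl

lemma main_ineq {T : SimpleGraph V} [DecidableRel T.Adj] (hT : T.IsTree) :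
    ∀ fuel : ℕ, ∀ D : Finset V, Fintype.card V ≤ fuel + D.card →
      ((D ≠ Finset.univ →
        2 * Fintype.card V + 1 ≤
          (T.maxDegree + 3) * auxVal T fuel true D + 2 * D.card + T.maxDegree) ∧
       2 * Fintype.card V ≤ (T.maxDegree + 3) * auxVal T fuel false D + 2 * D.card) := by
  intro fuel
  induction fuel with
  | zero =>
    intro D hfuel
    have hcard : D.card ≤ Fintype.card V := by
      simpa using Finset.card_le_card (Finset.subset_univ D)
    constructor
    · intro hne
      have : D.card < Fintype.card V := by
        have := Finset.card_lt_card (Finset.ssubset_univ_iff.2 hne)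
        simpa using this
      omega
    · rw [auxVal_zero]
      omega
  | succ m ih =>
    intro D hfuel
    by_cases hne : D = Finset.univ
    · subst hne
      refine ⟨fun h => absurd rfl h, ?_⟩
      rw [auxVal_succ_false, if_pos rfl, Finset.card_univ]
      omega
    · have hx : ∃ x, x ∉ D := by
        by_contra h; push_neg at h; exact hne (Finset.eq_univ_iff_forall.2 h)
      have hDle : ∀ v : V, ¬ cn T v ⊆ D →
          D.card + 1 ≤ (D ∪ cn T v).card ∧
          (D ∪ cn T v).card ≤ D.card + (cn T v \ D).card := by
        intro v hv
        constructor
        · obtain ⟨w, hw1, hw2⟩ := Finset.not_subset.1 hv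
          have hsub : insert w D ⊆ D ∪ cn T v := by
            intro x hxx
            rcases Finset.mem_insert.1 hxx with rfl | hxx
            · exact Finset.mem_union_right _ hw1
            · exact Finset.mem_union_left _ hxx
          have h2 := Finset.card_le_card hsub
          rwa [Finset.card_insert_of_notMem hw2] at h2
        · have h3 : D ∪ cn T v = D ∪ (cn T v \ D) := by
            rw [Finset.union_sdiff_self_eq_union]
          rw [h3]
          exact Finset.card_union_le _ _
      constructor
      · -- Dominator to move
        intro _
        rw [auxVal_succ_true, if_neg hne, Finset.filter_congr_decidable]
        obtain ⟨x, hxD⟩ := hx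
        have hxleg : ¬ cn T x ⊆ D := fun h => hxD (h (mem_cn.2 (Or.inl rfl)))
        have hMne : ((Finset.univ.filter (fun v => ¬ cn T v ⊆ D)).image
            (fun v => 1 + auxVal T m false (D ∪ cn T v))).Nonempty := by
          refine ⟨_, Finset.mem_image.2 ⟨x, ?_, rfl⟩⟩
          exact Finset.mem_filter.2 ⟨Finset.mem_univ x, hxleg⟩
        rw [← Finset.coe_min' hMne, WithTop.untopD_coe]
        obtain ⟨v, hvM, hveq⟩ := Finset.mem_image.1 (Finset.min'_mem _ hMne)
        rw [← hveq]
        have hvleg : ¬ cn T v ⊆ D := (Finset.mem_filter.1 hvM).2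
        have h1 := (hDle v hvleg).1
        have h2 : (D ∪ cn T v).card ≤ D.card + (T.maxDegree + 1) := by
          calc (D ∪ cn T v).card ≤ D.card + (cn T v).card := Finset.card_union_le _ _
            _ ≤ D.card + (T.maxDegree + 1) := by
                have := card_cn_le T v; omega
        have hfuel' : Fintype.card V ≤ m + (D ∪ cn T v).card := by omega
        have hih := (ih (D ∪ cn T v) hfuel').2
        have hexp : (T.maxDegree + 3) * (1 + auxVal T m false (D ∪ cn T v)) =
            (T.maxDegree + 3) + (T.maxDegree + 3) * auxVal T m false (D ∪ cn T v) := by ring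
        linarith
      · -- Staller to move
        rw [auxVal_succ_false, if_neg hne, Finset.filter_congr_decidable]
        obtain ⟨v, hvD, hv2⟩ := staller_move hT hne
        have hvleg : ¬ cn T v ⊆ D := fun h => hvD (h (mem_cn.2 (Or.inl rfl)))
        have hvM : v ∈ Finset.univ.filter (fun v => ¬ cn T v ⊆ D) :=
          Finset.mem_filter.2 ⟨Finset.mem_univ v, hvleg⟩
        have hsup := Finset.le_sup
          (f := fun v => 1 + auxVal T m true (D ∪ cn T v)) hvM
        have hc1 := (hDle v hvleg).1
        have hc2 := (hDle v hvleg).2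
        have hcn1 : (cn T v \ D).card ≤ T.maxDegree + 1 :=
          le_trans (Finset.card_le_card Finset.sdiff_subset) (card_cn_le T v)
        have hfuel' : Fintype.card V ≤ m + (D ∪ cn T v).card := by omega
        set S := (Finset.univ.filter (fun v => ¬ cn T v ⊆ D)).sup
          (fun v => 1 + auxVal T m true (D ∪ cn T v)) with hS
        by_cases hDu : D ∪ cn T v = Finset.univ
        · have hn : Fintype.card V ≤ D.card + (cn T v \ D).card := by
            have : (D ∪ cn T v).card = Fintype.card V := by
              rw [hDu, Finset.card_univ]
            omega
          have hb1 : 1 ≤ S := le_trans (Nat.le_add_right 1 _) hsup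
          have hmul : (T.maxDegree + 3) * 1 ≤ (T.maxDegree + 3) * S :=
            Nat.mul_le_mul_left _ hb1
          have h2c : 2 * (cn T v \ D).card ≤ T.maxDegree + 3 := by omega
          linarith
        · have hih := (ih (D ∪ cn T v) hfuel').1 hDu
          have hmul : (T.maxDegree + 3) * (1 + auxVal T m true (D ∪ cn T v)) ≤
              (T.maxDegree + 3) * S := Nat.mul_le_mul_left _ hsup
          have hexp : (T.maxDegree + 3) * (1 + auxVal T m true (D ∪ cn T v)) =
              (T.maxDegree + 3) + (T.maxDegree + 3) * auxVal T m true (D ∪ cn T v) := by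
            ring
          linarith

end Aux

/-- for a tree `T` on `n` vertices, γ_g(T) ≥ ⌈2n/(Δ(T)+3)⌉ − 1. -/
theorem stmt4 {V : Type*} [Fintype V] [DecidableEq V] (T : SimpleGraph V)
    [DecidableRel T.Adj] (hT : T.IsTree) :
    (⌈(2 * (Fintype.card V : ℚ)) / ((T.maxDegree : ℚ) + 3)⌉ : ℤ) - 1 ≤ (DomGame.gammaG T : ℤ) := by
  classical
  haveI : Nonempty V := hT.isConnected.nonempty
  have hn : 0 < Fintype.card V := Fintype.card_pos
  have hne : (∅ : Finset V) ≠ Finset.univ := by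
    intro h
    have h2 : (Finset.univ : Finset V).Nonempty := Finset.univ_nonempty
    rw [← h] at h2
    exact Finset.not_nonempty_empty h2
  have hmain := (main_ineq hT (Fintype.card V) ∅ (by simp)).1 hne
  rw [Finset.card_empty] at hmain
  have hg : DomGame.auxVal T (Fintype.card V) true ∅ = DomGame.gammaG T := rfl
  rw [hg] at hmain
  have key : 2 * Fintype.card V ≤ (T.maxDegree + 3) * (DomGame.gammaG T + 1) := by
    have hexp : (T.maxDegree + 3) * (DomGame.gammaG T + 1) =
        (T.maxDegree + 3) * DomGame.gammaG T + T.maxDegree + 3 := by ring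
    omega
  have hkey : (2 * (Fintype.card V : ℚ)) / ((T.maxDegree : ℚ) + 3) ≤
      (((DomGame.gammaG T : ℤ) + 1 : ℤ) : ℚ) := by
    rw [div_le_iff₀ (by positivity)]
    have hq : ((2 * Fintype.card V : ℕ) : ℚ) ≤
        (((T.maxDegree + 3) * (DomGame.gammaG T + 1) : ℕ) : ℚ) := by exact_mod_cast key
    push_cast at hq ⊢
    nlinarith [hq]
  have := Int.ceil_le.mpr hkey
  omega
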